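/- Let μ be a measure on ℝ^d with density f(‖y‖₂) where f : (0,∞) → [0,∞) is nonincreasing, and let H > 0, R > 0. Then μ(B(Re_1, H) ∩ {x : x_1 ≥ R}) ≤ μ(B(Re_1, H) ∩ {x : x_1 ≤ R}), and consequently μ(B(Re_1,H)) ≤ 2 μ(B(Re_1,H) ∩ {x : x_1 ≤ R}). -/

import Mathlib

open MeasureTheory Metric
open scoped ENNReal

/-- For a radial measure with nonincreasing density, the half of the ball
`B(Re₁, H)` beyond the hyperplane `{x₁ = R}` has no more mass than the half before it. -/
theorem radial_ball_reflection (d : ℕ) (hd : 1 ≤ d) (f : ℝ → ℝ)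
    (hf_nonneg : ∀ x, 0 < x → 0 ≤ f x)
    (hf_mono : ∀ x y, 0 < x → x ≤ y → f y ≤ f x)
    (hf_meas : Measurable f)
    (μ : Measure (EuclideanSpace ℝ (Fin d)))
    (hμ : μ = volume.withDensity (fun y => ENNReal.ofReal (f ‖y‖)))
    (R H : ℝ) (hR : 0 < R) (hH : 0 < H) :
    let e₁ : EuclideanSpace ℝ (Fin d) := EuclideanSpace.single (⟨0, by omega⟩ : Fin d) (1 : ℝ)
    μ (closedBall (R • e₁) H ∩ {x | R ≤ x ⟨0, by omega⟩}) ≤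
        μ (closedBall (R • e₁) H ∩ {x | x ⟨0, by omega⟩ ≤ R}) ∧
      μ (closedBall (R • e₁) H) ≤
        2 * μ (closedBall (R • e₁) H ∩ {x | x ⟨0, by omega⟩ ≤ R}) := by
  intro e₁
  classical
  set i0 : Fin d := ⟨0, by omega⟩ with hi0
  haveI : Nonempty (Fin d) := ⟨i0⟩
  -- the reflection across the hyperplane {x_{i0} = R}
  let φ : ∀ _ : Fin d, ℝ ≃ₗᵢ[ℝ] ℝ := fun i =>
    if i = i0 then LinearIsometryEquiv.neg ℝ else LinearIsometryEquiv.refl ℝ ℝ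
  let L : EuclideanSpace ℝ (Fin d) ≃ₗᵢ[ℝ] EuclideanSpace ℝ (Fin d) :=
    LinearIsometryEquiv.piLpCongrRight 2 φ
  let c : EuclideanSpace ℝ (Fin d) := (2 * R) • e₁
  let T : EuclideanSpace ℝ (Fin d) → EuclideanSpace ℝ (Fin d) := fun x => c + L x
  have he₁ : ∀ i, e₁ i = if i = i0 then (1 : ℝ) else 0 := by
    intro i; simp [e₁, EuclideanSpace.single_apply, hi0]
  have hL : ∀ (x : EuclideanSpace ℝ (Fin d)) (i : Fin d),
      L x i = if i = i0 then -x i else x i := by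
    intro x i
    simp only [L, LinearIsometryEquiv.piLpCongrRight_apply]
    by_cases h : i = i0
    · subst h; simp [φ]
    · simp [φ, h]
  have hT : ∀ (x : EuclideanSpace ℝ (Fin d)) (i : Fin d),
      T x i = if i = i0 then 2 * R - x i0 else x i := by
    intro x i
    have hTi : T x i = c i + L x i := rfl
    by_cases h : i = i0
    · subst h
      rw [hTi, hL, if_pos rfl, if_pos rfl]
      simp [c, he₁, PiLp.smul_apply]
      ring
    · rw [hTi, hL, if_neg h, if_neg h]
      simp [c, he₁, h, PiLp.smul_apply]
  have hTinv : ∀ x, T (T x) = x := by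
    intro x
    ext i
    by_cases h : i = i0
    · subst h; rw [hT, hT, if_pos rfl, if_pos rfl]; ring
    · rw [hT, if_neg h, hT, if_neg h]
  have hTdist : ∀ x y, dist (T x) (T y) = dist x y := by
    intro x y
    show dist (c + L x) (c + L y) = dist x y
    rw [dist_add_left, L.dist_map]
  have hTc : T (R • e₁) = R • e₁ := by
    ext i
    rw [hT]
    by_cases h : i = i0
    · subst h
      simp [he₁, PiLp.smul_apply]
      ring
    · simp [h]
  have hTball : ∀ x, T x ∈ closedBall (R • e₁) H ↔ x ∈ closedBall (R • e₁) H := by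
    intro x
    rw [mem_closedBall, mem_closedBall, ← hTdist x (R • e₁), hTc]
  -- norm decreases under T on the right half-space
  have hTnorm : ∀ x : EuclideanSpace ℝ (Fin d), R ≤ x i0 → ‖T x‖ ≤ ‖x‖ := by
    intro x hx
    rw [EuclideanSpace.norm_eq, EuclideanSpace.norm_eq]
    apply Real.sqrt_le_sqrt
    apply Finset.sum_le_sum
    intro i _
    rw [hT]
    by_cases h : i = i0
    · subst h
      rw [if_pos rfl, Real.norm_eq_abs, Real.norm_eq_abs, sq_abs, sq_abs]
      nlinarith
    · rw [if_neg h]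
  set B := closedBall (R • e₁) H with hB
  set Sge := B ∩ {x : EuclideanSpace ℝ (Fin d) | R ≤ x i0} with hSge
  set Sle := B ∩ {x : EuclideanSpace ℝ (Fin d) | x i0 ≤ R} with hSle
  have hmeas_coord : Measurable fun x : EuclideanSpace ℝ (Fin d) => x i0 :=
    ((continuous_apply i0).comp (PiLp.continuous_ofLp (p := 2) (β := fun _ : Fin d => ℝ))).measurable
  have hBmeas : MeasurableSet B := measurableSet_closedBall
  have hSgeMeas : MeasurableSet Sge :=
    hBmeas.inter (measurableSet_le measurable_const hmeas_coord)
  have hSleMeas : MeasurableSet Sle :=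
    hBmeas.inter (measurableSet_le hmeas_coord measurable_const)
  have hTpre : T ⁻¹' Sle = Sge := by
    ext x
    simp only [Set.mem_preimage, hSle, hSge, Set.mem_inter_iff, Set.mem_setOf_eq, hTball]
    constructor
    · rintro ⟨hb, hle⟩
      refine ⟨hb, ?_⟩
      rw [hT, if_pos rfl] at hle
      linarith
    · rintro ⟨hb, hge⟩
      refine ⟨hb, ?_⟩
      rw [hT, if_pos rfl]
      linarith
  have hg_meas : Measurable fun y : EuclideanSpace ℝ (Fin d) =>
      ENNReal.ofReal (f ‖y‖) :=
    (hf_meas.comp measurable_norm).ennreal_ofReal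
  have hTmp : MeasurePreserving T volume volume := by
    exact (measurePreserving_add_left volume c).comp L.measurePreserving
  -- the first inequality
  have key : μ Sge ≤ μ Sle := by
    rw [hμ, withDensity_apply _ hSgeMeas, withDensity_apply _ hSleMeas]
    have step2 : ∫⁻ y in Sge, ENNReal.ofReal (f ‖T y‖) ∂volume
        = ∫⁻ y in Sle, ENNReal.ofReal (f ‖y‖) ∂volume := by
      rw [← hTpre]
      exact hTmp.setLIntegral_comp_preimage hSleMeas hg_meas
    rw [← step2]
    apply setLIntegral_mono_ae ((hg_meas.comp hTmp.measurable).aemeasurable)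
    have hc0 : volume ({c} : Set (EuclideanSpace ℝ (Fin d))) = 0 := measure_singleton c
    filter_upwards [measure_eq_zero_iff_ae_notMem.mp hc0] with x hxc hxS
    have hxi : R ≤ x i0 := hxS.2
    have hx_pos : 0 < ‖x‖ := by
      have : x i0 ≠ 0 := by intro h; rw [h] at hxi; linarith
      have : x ≠ 0 := by
        intro h; apply this; rw [h]; rfl
      simpa [norm_pos_iff] using this
    have hTx_pos : 0 < ‖T x‖ := by
      rw [norm_pos_iff]
      intro h
      apply hxc
      have := congrArg T h
      rw [hTinv] at this
      have hT0 : T (0 : EuclideanSpace ℝ (Fin d)) = c := by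
        ext i
        rw [hT]
        by_cases hi : i = i0
        · subst hi
          simp [c, he₁, PiLp.smul_apply]
        · simp [hi, c, he₁, PiLp.smul_apply]
      rw [hT0] at this
      simp [this]
    exact ENNReal.ofReal_le_ofReal (hf_mono _ _ hTx_pos (hTnorm x hxi))
  refine ⟨key, ?_⟩
  have hcover : B ⊆ Sge ∪ Sle := by
    intro x hx
    rcases le_total R (x i0) with h | h
    · exact Or.inl ⟨hx, h⟩
    · exact Or.inr ⟨hx, h⟩
  calc μ B ≤ μ (Sge ∪ Sle) := measure_mono hcover
    _ ≤ μ Sge + μ Sle := measure_union_le _ _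
    _ ≤ μ Sle + μ Sle := add_le_add key le_rfl
    _ = 2 * μ Sle := (two_mul _).symm
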